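/- arXiv:1204.0876 — 2 statements merged into one kernel-verified Lean document; each statement's English description precedes it below -/
import Mathlib

section
/- Let G be a group and let k, l ≥ 1. For every σ ∈ A_G(k) and every x ∈ Γ_G(l), the element x⁻¹·x^σ lies in Γ_G(k+l). -/
/-!
STATEMENT 0: Let G be a group and let k, l ≥ 1. For every σ ∈ A_G(k) and every
x ∈ Γ_G(l), the element x⁻¹·x^σ lies in Γ_G(k+l).

Here `Γ_G(m) = (⊤ : Subgroup G).lowerCentralSeries (m-1)` (so `(⊤ : Subgroup G).lowerCentralSeries 0 = Γ_G(1) = G`),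
and `A_G(k)` (`johnsonFiltration G k`) is the kernel of `Aut G → Aut (G/Γ_G(k+1))`,
i.e. the automorphisms `σ` with `x⁻¹ * σ x ∈ Γ_G(k+1) = (⊤ : Subgroup G).lowerCentralSeries k` for all `x`.
-/

noncomputable section

open scoped commutatorElement

/-- For a subgroup `N` of `G`, the subgroup of automorphisms `σ` with `x⁻¹ · x^σ ∈ N`
for all `x`. -/
def fixFiltration {G : Type*} [Group G] (N : Subgroup G) : Subgroup (MulAut G) where
  carrier := {σ | ∀ x : G, x⁻¹ * σ x ∈ N}
  one_mem' := by intro x; simpa using N.one_mem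
  mul_mem' := by
    intro σ τ hσ hτ x
    have h3 : σ (x⁻¹ * τ x) ∈ N := by
      have h4 : σ (x⁻¹ * τ x) =
          (x⁻¹ * τ x) * ((x⁻¹ * τ x)⁻¹ * σ (x⁻¹ * τ x)) := by group
      rw [h4]
      exact N.mul_mem (hτ x) (hσ _)
    have h5 : x⁻¹ * (σ * τ) x = (x⁻¹ * σ x) * σ (x⁻¹ * τ x) := by
      rw [MulAut.mul_apply, map_mul, map_inv]; group
    rw [h5]
    exact N.mul_mem (hσ x) h3
  inv_mem' := by
    intro σ hσ x
    have h := hσ (σ⁻¹ x)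
    rw [MulAut.apply_inv_self] at h
    simpa [mul_inv_rev] using N.inv_mem h

/-- The Andreadakis–Johnson filtration: `johnsonFiltration G k = 𝒜_G(k)`, the kernel of
`Aut G → Aut (G/Γ_G(k+1))`, where `Γ_G(k+1) = (⊤ : Subgroup G).lowerCentralSeries k`. -/
def johnsonFiltration (G : Type*) [Group G] (k : ℕ) : Subgroup (MulAut G) :=
  fixFiltration ((⊤ : Subgroup G).lowerCentralSeries k)

theorem mem_johnsonFiltration {G : Type*} [Group G] {k : ℕ} {σ : MulAut G} :
    σ ∈ johnsonFiltration G k ↔ ∀ x : G, x⁻¹ * σ x ∈ (⊤ : Subgroup G).lowerCentralSeries k :=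
  Iff.rfl


theorem lcs_succ {G : Type*} [Group G] (n : ℕ) :
    (⊤ : Subgroup G).lowerCentralSeries (n + 1) = ⁅(⊤ : Subgroup G).lowerCentralSeries n, ⊤⁆ := rfl

/-- `⁅Γ_{i+1}, Γ_{j+1}⁆ ≤ Γ_{i+j+2}` (0-indexed: `⁅LCS i, LCS j⁆ ≤ LCS (i+j+1)`). -/
theorem lcs_commutator_le {G : Type*} [Group G] (j i : ℕ) :
    ⁅(⊤ : Subgroup G).lowerCentralSeries i, (⊤ : Subgroup G).lowerCentralSeries j⁆ ≤ (⊤ : Subgroup G).lowerCentralSeries (i + j + 1) := by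
  induction j generalizing i with
  | zero =>
    rw [Subgroup.lowerCentralSeries_zero]
    exact le_of_eq (lcs_succ i).symm
  | succ j ih =>
    set N : Subgroup G := (⊤ : Subgroup G).lowerCentralSeries (i + (j + 1) + 1) with hN
    have hNnormal : N.Normal := Subgroup.lowerCentralSeries_normal _ _
    let π : G →* G ⧸ N := QuotientGroup.mk' N
    rw [Subgroup.lowerCentralSeries_succ (n := j)]
    have key : Subgroup.map π ⁅⁅(⊤ : Subgroup G).lowerCentralSeries j, (⊤ : Subgroup G)⁆,
        (⊤ : Subgroup G).lowerCentralSeries i⁆ = ⊥ := by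
      rw [Subgroup.map_commutator, Subgroup.map_commutator]
      apply Subgroup.commutator_commutator_eq_bot_of_rotate
      · rw [← Subgroup.map_commutator, ← Subgroup.map_commutator,
          Subgroup.map_eq_bot_iff, QuotientGroup.ker_mk']
        calc ⁅⁅(⊤ : Subgroup G), (⊤ : Subgroup G).lowerCentralSeries i⁆, (⊤ : Subgroup G).lowerCentralSeries j⁆
            = ⁅⁅(⊤ : Subgroup G).lowerCentralSeries i, (⊤ : Subgroup G)⁆, (⊤ : Subgroup G).lowerCentralSeries j⁆ := by
              rw [Subgroup.commutator_comm (⊤ : Subgroup G)]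
          _ = ⁅(⊤ : Subgroup G).lowerCentralSeries (i + 1), (⊤ : Subgroup G).lowerCentralSeries j⁆ := by
              rw [← lcs_succ]
          _ ≤ (⊤ : Subgroup G).lowerCentralSeries (i + 1 + j + 1) := ih (i + 1)
          _ = N := by rw [hN]; ring_nf
      · rw [← Subgroup.map_commutator, ← Subgroup.map_commutator,
          Subgroup.map_eq_bot_iff, QuotientGroup.ker_mk']
        calc ⁅⁅(⊤ : Subgroup G).lowerCentralSeries i, (⊤ : Subgroup G).lowerCentralSeries j⁆, (⊤ : Subgroup G)⁆
            ≤ ⁅(⊤ : Subgroup G).lowerCentralSeries (i + j + 1), (⊤ : Subgroup G)⁆ :=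
              Subgroup.commutator_mono (ih i) le_rfl
          _ = (⊤ : Subgroup G).lowerCentralSeries (i + j + 1 + 1) := (lcs_succ _).symm
          _ = N := by rw [hN]; ring_nf
    have h2 : ⁅⁅(⊤ : Subgroup G).lowerCentralSeries j, (⊤ : Subgroup G)⁆, (⊤ : Subgroup G).lowerCentralSeries i⁆ ≤ N := by
      rw [← QuotientGroup.ker_mk' N, ← Subgroup.map_eq_bot_iff]
      exact key
    rw [Subgroup.commutator_comm]
    exact h2


theorem comm_trick {Q : Type*} [Group Q] (A B u v : Q)
    (hu : ∀ y, u * y = y * u) (hv : A * v = v * A) : ⁅A * u, B * v⁆ = ⁅A, B⁆ := by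
  have hc : Commute A v := hv
  have hv' : v * A⁻¹ = A⁻¹ * v := (hc.inv_left.eq).symm
  calc ⁅A * u, B * v⁆ = A * u * (B * v) * (A * u)⁻¹ * (B * v)⁻¹ := rfl
    _ = A * (u * B) * v * (u⁻¹ * A⁻¹) * (v⁻¹ * B⁻¹) := by
        simp only [mul_inv_rev]; group
    _ = A * (B * u) * v * (u⁻¹ * A⁻¹) * (v⁻¹ * B⁻¹) := by rw [hu B]
    _ = A * B * (u * (v * u⁻¹)) * A⁻¹ * (v⁻¹ * B⁻¹) := by group
    _ = A * B * (v * u⁻¹ * u) * A⁻¹ * (v⁻¹ * B⁻¹) := by rw [hu (v * u⁻¹), mul_assoc v u⁻¹ u]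
    _ = A * B * (v * A⁻¹) * (v⁻¹ * B⁻¹) := by group
    _ = A * B * (A⁻¹ * v) * (v⁻¹ * B⁻¹) := by rw [hv']
    _ = ⁅A, B⁆ := by group

theorem statement0 (G : Type*) [Group G] (k l : ℕ) (hk : 1 ≤ k) (hl : 1 ≤ l)
    (σ : MulAut G) (hσ : σ ∈ johnsonFiltration G k)
    (x : G) (hx : x ∈ (⊤ : Subgroup G).lowerCentralSeries (l - 1)) :
    x⁻¹ * σ x ∈ (⊤ : Subgroup G).lowerCentralSeries (k + l - 1) := by
  -- reindex: write `l = m + 1`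
  obtain ⟨m, rfl⟩ : ∃ m, l = m + 1 := ⟨l - 1, (Nat.succ_pred_eq_of_pos hl).symm⟩
  simp only [Nat.add_sub_cancel] at hx
  rw [show k + (m + 1) - 1 = k + m from by omega]
  clear hl
  induction m generalizing x with
  | zero => simpa using hσ x
  | succ m ih =>
    set N : Subgroup G := (⊤ : Subgroup G).lowerCentralSeries (k + (m + 1)) with hN
    have hNnormal : N.Normal := Subgroup.lowerCentralSeries_normal _ _
    -- the set of `x` with `x⁻¹ * σ x ∈ N` is a subgroup
    let S : Subgroup G :=
      { carrier := {y | y⁻¹ * σ y ∈ N}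
        one_mem' := by simpa using N.one_mem
        mul_mem' := by
          intro a b ha hb
          have h1 : (a * b)⁻¹ * σ (a * b) = b⁻¹ * (a⁻¹ * σ a) * b * (b⁻¹ * σ b) := by
            rw [map_mul]; group
          rw [Set.mem_setOf_eq, h1]
          exact N.mul_mem (hNnormal.conj_mem' _ ha b) hb
        inv_mem' := by
          intro a ha
          have h1 : (a⁻¹)⁻¹ * σ a⁻¹ = a * (a⁻¹ * σ a)⁻¹ * a⁻¹ := by
            rw [map_inv]; group
          rw [Set.mem_setOf_eq, h1]
          simpa using hNnormal.conj_mem _ (N.inv_mem ha) a }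
    suffices hS : (⊤ : Subgroup G).lowerCentralSeries (m + 1) ≤ S from hS hx
    rw [lcs_succ, Subgroup.commutator_le]
    intro a ha g _
    show ⁅a, g⁆⁻¹ * σ ⁅a, g⁆ ∈ N
    set π : G →* G ⧸ N := QuotientGroup.mk' N with hπ
    rw [← QuotientGroup.eq_one_iff (N := N), ← QuotientGroup.mk'_apply,
      map_mul, map_inv, inv_mul_eq_one]
    -- facts about α = a⁻¹ σ a and β = g⁻¹ σ g
    set α : G := a⁻¹ * σ a with hα
    set β : G := g⁻¹ * σ g with hβ
    have hαmem : α ∈ (⊤ : Subgroup G).lowerCentralSeries (k + m) := ih a ha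
    have hβmem : β ∈ (⊤ : Subgroup G).lowerCentralSeries k := hσ g
    have hαcomm : ∀ y : G, Commute (π α) (π y) := by
      intro y
      rw [← commutatorElement_eq_one_iff_commute, ← map_commutatorElement,
        QuotientGroup.mk'_apply, QuotientGroup.eq_one_iff]
      have : ⁅α, y⁆ ∈ ⁅(⊤ : Subgroup G).lowerCentralSeries (k + m), (⊤ : Subgroup G)⁆ :=
        Subgroup.commutator_mem_commutator hαmem (Subgroup.mem_top y)
      rw [← lcs_succ] at this
      exact this
    have haβ : Commute (π a) (π β) := by
      rw [← commutatorElement_eq_one_iff_commute, ← map_commutatorElement,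
        QuotientGroup.mk'_apply, QuotientGroup.eq_one_iff]
      have : ⁅a, β⁆ ∈ ⁅(⊤ : Subgroup G).lowerCentralSeries m, (⊤ : Subgroup G).lowerCentralSeries k⁆ :=
        Subgroup.commutator_mem_commutator ha hβmem
      have h2 := lcs_commutator_le (G := G) k m this
      have h3 : m + k + 1 = k + (m + 1) := by ring
      rwa [h3] at h2
    -- σ a = a * α, σ g = g * β
    have hσa : σ a = a * α := by rw [hα]; group
    have hσg : σ g = g * β := by rw [hβ]; group
    rw [map_commutatorElement, map_commutatorElement, map_commutatorElement, ← hπ]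
    have ea : π (σ a) = π a * π α := by rw [hσa, map_mul]
    have eg : π (σ g) = π g * π β := by rw [hσg, map_mul]
    rw [ea, eg]
    refine (comm_trick (π a) (π g) (π α) (π β) ?_ haβ.eq).symm
    intro y
    obtain ⟨z, rfl⟩ := QuotientGroup.mk'_surjective N y
    exact (hαcomm z).eq
end
end

section
/- For any n ≥ 2, the first homology group H_1(K_n, Z) = K_n^ab of the kernel K_n of the natural homomorphism ν : IA_n → IA_n^M has infinite rank; that is, K_n^ab ⊗_Z Q is an infinite-dimensional Q-vector space. In particular K_n (which equals the kernel of the Magnus representation r^𝔞 of IA_n) is not finitely generated. -/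
/-!
STATEMENT 17: For any n ≥ 2, the first homology group H_1(K_n, Z) = K_n^ab of the kernel
K_n of the natural homomorphism ν : IA_n → IA_n^M has infinite rank; that is,
K_n^ab ⊗_Z Q is an infinite-dimensional Q-vector space.  In particular K_n (which equals
the kernel of the Magnus representation r^𝔞 of IA_n) is not finitely generated.

Encoding: `F = FreeGroup (Fin n)`, `F^M = F ⧸ derivedSeries F 2`,
`IA_n = johnsonFiltration F 1`, ν is the restriction to IA_n of
`mulAutQuotientMap (derivedSeries F 2) : MulAut F →* MulAut F^M`, so
`K_n = IA_n ⊓ ker (mulAutQuotientMap _)`.  "Infinite rank" is expressed as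
`¬ Module.Finite ℚ (ℚ ⊗[ℤ] Additive (Abelianization K_n))`.
-/

noncomputable section

open scoped TensorProduct
noncomputable section

instance lowerCentralSeries_characteristic (G : Type*) [Group G] (n : ℕ) :
    ((⊤ : Subgroup G).lowerCentralSeries n).Characteristic := by
  induction n with
  | zero => rw [Subgroup.lowerCentralSeries_zero]; infer_instance
  | succ n ih => rw [Subgroup.lowerCentralSeries_succ]; exact Subgroup.commutator_characteristic _ _

instance derivedSeries_characteristic' (G : Type*) [Group G] (n : ℕ) :
    (derivedSeries G n).Characteristic := by
  induction n with
  | zero => rw [derivedSeries_zero]; infer_instance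
  | succ n ih => rw [derivedSeries_succ]; exact Subgroup.commutator_characteristic _ _

/-- The natural homomorphism `Aut G → Aut (G/N)` for a characteristic subgroup `N`. -/
def mulAutQuotientMap {G : Type*} [Group G] (N : Subgroup G) [N.Normal] [N.Characteristic] :
    MulAut G →* MulAut (G ⧸ N) where
  toFun σ := QuotientGroup.congr N N σ (Subgroup.characteristic_iff_map_eq.mp inferInstance σ)
  map_one' := by
    ext x
    induction x using QuotientGroup.induction_on with
    | H x => rfl
  map_mul' σ τ := by
    ext x
    induction x using QuotientGroup.induction_on with
    | H x => rfl

/-- The free metabelian group of rank `n`. -/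
abbrev FreeMetabelianGroup (n : ℕ) :=
  FreeGroup (Fin n) ⧸ derivedSeries (FreeGroup (Fin n)) 2

/-- The natural homomorphism `Aut F_n → Aut F_n^M`. -/
def nuAut (n : ℕ) : MulAut (FreeGroup (Fin n)) →* MulAut (FreeMetabelianGroup n) :=
  mulAutQuotientMap (derivedSeries (FreeGroup (Fin n)) 2)

/-- `K_n`, the kernel of `ν : IA_n → IA_n^M`. -/
def magnusKernel (n : ℕ) : Subgroup (MulAut (FreeGroup (Fin n))) :=
  johnsonFiltration (FreeGroup (Fin n)) 1 ⊓ (nuAut n).ker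

/-! ### Auxiliary development for statement 17 -/

namespace S17

open scoped commutatorElement

/-- Shift translation on integer-valued functions on `ℤ × ℤ`. -/
def shiftAdd (a : ℤ × ℤ) : ((ℤ × ℤ) → ℤ) ≃+ ((ℤ × ℤ) → ℤ) where
  toFun p := fun t => p (t + a)
  invFun p := fun t => p (t - a)
  left_inv p := by funext t; simp
  right_inv p := by funext t; simp
  map_add' p q := rfl

def shiftHom : Multiplicative (ℤ × ℤ) →* MulAut (Multiplicative ((ℤ × ℤ) → ℤ)) where
  toFun a := AddEquiv.toMultiplicative (shiftAdd a.toAdd)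
  map_one' := by
    ext p
    simp [AddEquiv.toMultiplicative, AddMonoidHom.toMultiplicative, shiftAdd]
  map_mul' a b := by
    ext p
    simp [AddEquiv.toMultiplicative, AddMonoidHom.toMultiplicative, shiftAdd, toAdd_mul]
    congr 1
    congr 1
    ring

/-- The "lamplighter-like" group `((ℤ×ℤ) → ℤ) ⋊ ℤ²`. -/
abbrev Lamp := SemidirectProduct (Multiplicative ((ℤ × ℤ) → ℤ)) (Multiplicative (ℤ × ℤ)) shiftHom

lemma shiftHom_apply (a : Multiplicative (ℤ × ℤ)) (p : Multiplicative ((ℤ × ℤ) → ℤ))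
    (t : ℤ × ℤ) : (shiftHom a p).toAdd t = p.toAdd (t + a.toAdd) := rfl

/-- The integral Heisenberg group, as `(ℤ (center) × ℤ) ⋊ ℤ`. -/
def heisAdd (a : ℤ) : (ℤ × ℤ) ≃+ (ℤ × ℤ) where
  toFun cb := (cb.1 + a * cb.2, cb.2)
  invFun cb := (cb.1 - a * cb.2, cb.2)
  left_inv cb := by simp
  right_inv cb := by simp
  map_add' cb cb' := by simp [Prod.add_def]; ring

def heisHom : Multiplicative ℤ →* MulAut (Multiplicative (ℤ × ℤ)) where
  toFun a := AddEquiv.toMultiplicative (heisAdd a.toAdd)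
  map_one' := by
    ext p
    all_goals simp [AddEquiv.toMultiplicative, AddMonoidHom.toMultiplicative, heisAdd]
  map_mul' a b := by
    ext p
    all_goals simp [AddEquiv.toMultiplicative, AddMonoidHom.toMultiplicative, heisAdd, toAdd_mul,
      Prod.add_def]
    all_goals ring

abbrev Heis := SemidirectProduct (Multiplicative (ℤ × ℤ)) (Multiplicative ℤ) heisHom

def pH : Heis →* Multiplicative (ℤ × ℤ) where
  toFun e := Multiplicative.ofAdd (e.right.toAdd, e.left.toAdd.2)
  map_one' := rfl
  map_mul' e e' := rfl

lemma pH_surj : Function.Surjective pH := by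
  intro q
  exact ⟨⟨Multiplicative.ofAdd (0, q.toAdd.2), Multiplicative.ofAdd q.toAdd.1⟩, rfl⟩

def Zc (e : Heis) : ℤ := e.left.toAdd.1

lemma Zc_mul (e e' : Heis) (h : e.right = 1) : Zc (e * e') = Zc e + Zc e' := by
  have h2 : (e * e').left = e.left * heisHom e.right e'.left := SemidirectProduct.mul_left e e'
  rw [h] at h2
  simp only [map_one, MulAut.one_apply] at h2
  show (e * e').left.toAdd.1 = _
  rw [h2]
  rfl

lemma Zc_one : Zc 1 = 0 := rfl

lemma Zc_comm (e e' : Heis) :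
    Zc ⁅e, e'⁆ = e.right.toAdd * e'.left.toAdd.2 - e'.right.toAdd * e.left.toAdd.2 := by
  simp only [commutatorElement_def, SemidirectProduct.mul_left, SemidirectProduct.inv_left,
    SemidirectProduct.inv_right, SemidirectProduct.mul_right, Zc, heisHom, MonoidHom.coe_mk,
    OneHom.coe_mk]
  simp [AddEquiv.toMultiplicative, AddMonoidHom.toMultiplicative, heisAdd, toAdd_mul, toAdd_inv,
    Prod.add_def]
  ring

variable {n : ℕ}

/-- Generators for the lamplighter representation. -/
def lampGen (n : ℕ) : Fin n → Lamp := fun i =>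
  if (i : ℕ) = 0 then ⟨1, Multiplicative.ofAdd ((1 : ℤ), (0 : ℤ))⟩
  else if (i : ℕ) = 1 then
    ⟨Multiplicative.ofAdd (fun t : ℤ × ℤ => if t = 0 then (1 : ℤ) else 0),
      Multiplicative.ofAdd ((0 : ℤ), (1 : ℤ))⟩
  else 1

def psi (n : ℕ) : FreeGroup (Fin n) →* Lamp := FreeGroup.lift (lampGen n)

def piP (n : ℕ) : FreeGroup (Fin n) →* Multiplicative (ℤ × ℤ) :=
  FreeGroup.lift fun i =>
    if (i : ℕ) = 0 then Multiplicative.ofAdd ((1 : ℤ), (0 : ℤ))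
    else if (i : ℕ) = 1 then Multiplicative.ofAdd ((0 : ℤ), (1 : ℤ)) else 1

lemma rightHom_psi (n : ℕ) :
    (SemidirectProduct.rightHom).comp (psi n) = piP n := by
  apply FreeGroup.ext_hom
  intro a
  simp only [MonoidHom.comp_apply, psi, piP, FreeGroup.lift_apply_of, lampGen]
  by_cases h0 : (a : ℕ) = 0
  · simp [h0]
  · by_cases h1 : (a : ℕ) = 1 <;> simp [h0, h1]

def R (n : ℕ) : Subgroup (FreeGroup (Fin n)) := (piP n).ker

lemma right_psi_eq_one {w : FreeGroup (Fin n)} (hw : w ∈ R n) : (psi n w).right = 1 := by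
  have h2 : SemidirectProduct.rightHom (psi n w) = piP n w :=
    DFunLike.congr_fun (rightHom_psi n) w
  rw [MonoidHom.mem_ker.mp hw] at h2
  exact h2

/-- Evaluation of the lamp part at a point. -/
def fE (n : ℕ) (h : ℤ × ℤ) (w : FreeGroup (Fin n)) : ℤ := ((psi n w).left).toAdd h

lemma fE_mul (h : ℤ × ℤ) {w : FreeGroup (Fin n)} (w' : FreeGroup (Fin n)) (hw : w ∈ R n) :
    fE n h (w * w') = fE n h w + fE n h w' := by
  unfold fE
  rw [map_mul, SemidirectProduct.mul_left, right_psi_eq_one hw, map_one]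
  rfl

lemma fE_one (h : ℤ × ℤ) : fE n h 1 = 0 := by simp [fE]

lemma fE_inv (h : ℤ × ℤ) {w : FreeGroup (Fin n)} (hw : w ∈ R n) :
    fE n h w⁻¹ = -fE n h w := by
  have h2 := fE_mul h w⁻¹ hw
  rw [mul_inv_cancel, fE_one] at h2
  omega

/-- Lifting along a surjection out of a free group. -/
lemma exists_lift {G E Q : Type*} [Group G] [IsFreeGroup G] [Group E] [Group Q]
    (p : E →* Q) (hp : Function.Surjective p) (f : G →* Q) :
    ∃ ft : G →* E, p.comp ft = f := by
  refine ⟨IsFreeGroup.lift fun i => (hp (f (IsFreeGroup.of i))).choose, ?_⟩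
  apply IsFreeGroup.ext_hom
  intro a
  simp only [MonoidHom.comp_apply, IsFreeGroup.lift_of]
  exact (hp (f (IsFreeGroup.of a))).choose_spec

lemma D1_le_R (n : ℕ) : derivedSeries (FreeGroup (Fin n)) 1 ≤ R n := by
  rw [derivedSeries_succ, derivedSeries_zero, Subgroup.commutator_le]
  intro g₁ _ g₂ _
  rw [R, MonoidHom.mem_ker, map_commutatorElement]
  exact commutatorElement_eq_one_iff_commute.mpr (mul_comm _ _)

lemma D2_le_D1 (n : ℕ) :
    derivedSeries (FreeGroup (Fin n)) 2 ≤ derivedSeries (FreeGroup (Fin n)) 1 := by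
  rw [show (2:ℕ) = 1 + 1 from rfl, derivedSeries_succ, Subgroup.commutator_le]
  intro g₁ h₁ g₂ h₂
  rw [commutatorElement_def]
  exact mul_mem (mul_mem (mul_mem h₁ h₂) (inv_mem h₁)) (inv_mem h₂)

lemma D2_le_R (n : ℕ) : derivedSeries (FreeGroup (Fin n)) 2 ≤ R n :=
  (D2_le_D1 n).trans (D1_le_R n)

def h1 : ℤ × ℤ := (-1, 0)

def h2 (k : ℕ) : ℤ × ℤ := ((k : ℤ) - 1, 0)

def phifg (n k : ℕ) : ↥(R n) →* Multiplicative (ℤ × ℤ) where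
  toFun r := Multiplicative.ofAdd (fE n h1 r, fE n (h2 k) r)
  map_one' := by
    simp only [OneMemClass.coe_one, fE_one]
    rfl
  map_mul' r s := by
    have hmul : ((r * s : ↥(R n)) : FreeGroup (Fin n)) = (r : FreeGroup (Fin n)) * s := rfl
    simp only [hmul, fE_mul _ (s : FreeGroup (Fin n)) r.2]
    rfl

def tilde (n k : ℕ) : ↥(R n) →* Heis :=
  (exists_lift pH pH_surj (phifg n k)).choose

lemma pH_tilde (n k : ℕ) : pH.comp (tilde n k) = phifg n k :=
  (exists_lift pH pH_surj (phifg n k)).choose_spec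

lemma tilde_right (n k : ℕ) (r : ↥(R n)) :
    (tilde n k r).right.toAdd = fE n h1 (r : FreeGroup (Fin n)) := by
  have h2' : pH (tilde n k r) = phifg n k r := DFunLike.congr_fun (pH_tilde n k) r
  have := congrArg (fun q : Multiplicative (ℤ × ℤ) => q.toAdd.1) h2'
  exact this

lemma tilde_left2 (n k : ℕ) (r : ↥(R n)) :
    (tilde n k r).left.toAdd.2 = fE n (h2 k) (r : FreeGroup (Fin n)) := by
  have h2' : pH (tilde n k r) = phifg n k r := DFunLike.congr_fun (pH_tilde n k) r
  have := congrArg (fun q : Multiplicative (ℤ × ℤ) => q.toAdd.2) h2'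
  exact this

open Classical in
/-- The `μ` homomorphism-like function on `F`. -/
def mu (n k : ℕ) (w : FreeGroup (Fin n)) : ℤ :=
  if hw : w ∈ R n then Zc (tilde n k ⟨w, hw⟩) else 0

lemma mu_def (n k : ℕ) {w : FreeGroup (Fin n)} (hw : w ∈ R n) :
    mu n k w = Zc (tilde n k ⟨w, hw⟩) := by
  unfold mu
  rw [dif_pos hw]

lemma mu_one (n k : ℕ) : mu n k 1 = 0 := by
  rw [mu_def n k (one_mem _)]
  have : (⟨1, one_mem _⟩ : ↥(R n)) = 1 := rfl
  rw [this, map_one]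
  rfl

lemma mu_mul (n k : ℕ) {w w' : FreeGroup (Fin n)} (hw : w ∈ R n) (hw' : w' ∈ R n)
    (hz : fE n h1 w = 0) : mu n k (w * w') = mu n k w + mu n k w' := by
  rw [mu_def n k (mul_mem hw hw'), mu_def n k hw, mu_def n k hw']
  have hmk : (⟨w * w', mul_mem hw hw'⟩ : ↥(R n)) = ⟨w, hw⟩ * ⟨w', hw'⟩ := rfl
  rw [hmk, map_mul]
  apply Zc_mul
  have h3 := tilde_right n k ⟨w, hw⟩
  rw [hz] at h3
  have : ((tilde n k ⟨w, hw⟩).right.toAdd : ℤ) = ((1 : Multiplicative ℤ).toAdd : ℤ) := h3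
  exact Multiplicative.toAdd.injective this

lemma mu_inv (n k : ℕ) {w : FreeGroup (Fin n)} (hw : w ∈ R n)
    (hz : fE n h1 w = 0) : mu n k w⁻¹ = -mu n k w := by
  have h2 := mu_mul n k hw (inv_mem hw) hz
  rw [mul_inv_cancel, mu_one] at h2
  omega

lemma mu_commutator (n k : ℕ) {u v : FreeGroup (Fin n)} (hu : u ∈ R n) (hv : v ∈ R n) :
    mu n k ⁅u, v⁆ = fE n h1 u * fE n (h2 k) v - fE n h1 v * fE n (h2 k) u := by
  have hmem : ⁅u, v⁆ ∈ R n := by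
    rw [commutatorElement_def]
    exact mul_mem (mul_mem (mul_mem hu hv) (inv_mem hu)) (inv_mem hv)
  rw [mu_def n k hmem]
  have hmk : (⟨⁅u, v⁆, hmem⟩ : ↥(R n)) = ⁅(⟨u, hu⟩ : ↥(R n)), (⟨v, hv⟩ : ↥(R n))⁆ := rfl
  rw [hmk, map_commutatorElement, Zc_comm, tilde_right, tilde_left2, tilde_right, tilde_left2]

lemma fE_vanish (h : ℤ × ℤ) {w : FreeGroup (Fin n)}
    (hw : w ∈ derivedSeries (FreeGroup (Fin n)) 2) : fE n h w = 0 := by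
  rw [show (2:ℕ) = 1 + 1 from rfl, derivedSeries_succ, Subgroup.commutator_def] at hw
  have key : w ∈ R n ∧ fE n h w = 0 := by
    refine Subgroup.closure_induction
      (p := fun x _ => x ∈ R n ∧ fE n h x = 0) ?_ ?_ ?_ ?_ hw
    · rintro x ⟨u, hu, v, hv, rfl⟩
      have hu' := D1_le_R n hu
      have hv' := D1_le_R n hv
      constructor
      · rw [commutatorElement_def]
        exact mul_mem (mul_mem (mul_mem hu' hv') (inv_mem hu')) (inv_mem hv')
      · rw [commutatorElement_def, fE_mul h _ (mul_mem (mul_mem hu' hv') (inv_mem hu')),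
          fE_mul h _ (mul_mem hu' hv'), fE_mul h _ hu', fE_inv h hu', fE_inv h hv']
        ring
    · exact ⟨one_mem _, fE_one h⟩
    · rintro x y _ _ ⟨hxR, hx0⟩ ⟨hyR, hy0⟩
      exact ⟨mul_mem hxR hyR, by rw [fE_mul h _ hxR, hx0, hy0, add_zero]⟩
    · rintro x _ ⟨hxR, hx0⟩
      exact ⟨inv_mem hxR, by rw [fE_inv h hxR, hx0, neg_zero]⟩
  exact key.2

lemma sigma_mem_D2 (σ : MulAut (FreeGroup (Fin n)))
    (hσ : ∀ w, w⁻¹ * σ w ∈ derivedSeries (FreeGroup (Fin n)) 2)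
    {d : FreeGroup (Fin n)} (hd : d ∈ derivedSeries (FreeGroup (Fin n)) 2) :
    σ d ∈ derivedSeries (FreeGroup (Fin n)) 2 := by
  have : σ d = d * (d⁻¹ * σ d) := by group
  rw [this]
  exact mul_mem hd (hσ d)

lemma fE_sigma (h : ℤ × ℤ) (σ : MulAut (FreeGroup (Fin n)))
    (hσ : ∀ w, w⁻¹ * σ w ∈ derivedSeries (FreeGroup (Fin n)) 2)
    {u : FreeGroup (Fin n)} (hu : u ∈ R n) : fE n h (σ u) = fE n h u := by
  have h2 : σ u = u * (u⁻¹ * σ u) := by group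
  rw [h2, fE_mul h _ hu, fE_vanish h (hσ u), add_zero]

lemma mu_equivariant (n k : ℕ) (σ : MulAut (FreeGroup (Fin n)))
    (hσ : ∀ w, w⁻¹ * σ w ∈ derivedSeries (FreeGroup (Fin n)) 2)
    {d : FreeGroup (Fin n)} (hd : d ∈ derivedSeries (FreeGroup (Fin n)) 2) :
    mu n k (σ d) = mu n k d := by
  have hd' := hd
  rw [show (2:ℕ) = 1 + 1 from rfl, derivedSeries_succ, Subgroup.commutator_def] at hd'
  have key : d ∈ derivedSeries (FreeGroup (Fin n)) 2 ∧ mu n k (σ d) = mu n k d := by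
    refine Subgroup.closure_induction
      (p := fun x _ => x ∈ derivedSeries (FreeGroup (Fin n)) 2 ∧ mu n k (σ x) = mu n k x)
      ?_ ?_ ?_ ?_ hd'
    · rintro x ⟨u, hu, v, hv, rfl⟩
      have hmem : ⁅u, v⁆ ∈ derivedSeries (FreeGroup (Fin n)) 2 := by
        rw [show (2:ℕ) = 1 + 1 from rfl, derivedSeries_succ]
        exact Subgroup.commutator_mem_commutator hu hv
      refine ⟨hmem, ?_⟩
      have hu' := D1_le_R n hu
      have hv' := D1_le_R n hv
      have hσu : σ u ∈ R n := by
        have h2 : σ u = u * (u⁻¹ * σ u) := by group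
        rw [h2]; exact mul_mem hu' (D2_le_R n (hσ u))
      have hσv : σ v ∈ R n := by
        have h2 : σ v = v * (v⁻¹ * σ v) := by group
        rw [h2]; exact mul_mem hv' (D2_le_R n (hσ v))
      have hcomm : σ ⁅u, v⁆ = ⁅σ u, σ v⁆ := by
        simp [commutatorElement_def]
      rw [hcomm, mu_commutator n k hσu hσv, mu_commutator n k hu' hv',
        fE_sigma _ σ hσ hu', fE_sigma _ σ hσ hv', fE_sigma _ σ hσ hu', fE_sigma _ σ hσ hv']
    · exact ⟨one_mem _, by rw [map_one]⟩
    · rintro x y _ _ ⟨hx2, hxv⟩ ⟨hy2, hyv⟩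
      refine ⟨mul_mem hx2 hy2, ?_⟩
      rw [map_mul,
        mu_mul n k (D2_le_R n (sigma_mem_D2 σ hσ hx2)) (D2_le_R n (sigma_mem_D2 σ hσ hy2))
          (fE_vanish h1 (sigma_mem_D2 σ hσ hx2)),
        mu_mul n k (D2_le_R n hx2) (D2_le_R n hy2) (fE_vanish h1 hx2), hxv, hyv]
    · rintro x _ ⟨hx2, hxv⟩
      refine ⟨inv_mem hx2, ?_⟩
      rw [map_inv,
        mu_inv n k (D2_le_R n (sigma_mem_D2 σ hσ hx2)) (fE_vanish h1 (sigma_mem_D2 σ hσ hx2)),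
        mu_inv n k (D2_le_R n hx2) (fE_vanish h1 hx2), hxv]
  exact key.2

lemma mem_ker_nuAut_iff (σ : MulAut (FreeGroup (Fin n))) :
    σ ∈ (nuAut n).ker ↔ ∀ w, w⁻¹ * σ w ∈ derivedSeries (FreeGroup (Fin n)) 2 := by
  have congr_apply : ∀ (τ : MulAut (FreeGroup (Fin n))) (w : FreeGroup (Fin n)),
      (nuAut n τ) (QuotientGroup.mk w) = QuotientGroup.mk (τ w) := fun τ w => rfl
  constructor
  · intro h w
    have h0 : nuAut n σ = 1 := MonoidHom.mem_ker.mp h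
    have h1' : QuotientGroup.mk (σ w)
        = (QuotientGroup.mk w : FreeMetabelianGroup n) := by
      rw [← congr_apply σ w, h0]; rfl
    have h2' := QuotientGroup.eq.mp h1'
    have h3' : w⁻¹ * σ w = ((σ w)⁻¹ * w)⁻¹ := by group
    rw [h3']
    exact inv_mem h2'
  · intro h
    rw [MonoidHom.mem_ker]
    apply DFunLike.ext
    intro q
    induction q using QuotientGroup.induction_on with
    | H w =>
      rw [congr_apply σ w]
      show _ = QuotientGroup.mk w
      rw [QuotientGroup.eq]
      have h3' : (σ w)⁻¹ * w = (w⁻¹ * σ w)⁻¹ := by group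
      rw [h3']
      exact inv_mem (h w)

lemma mem_magnusKernel_iff (σ : MulAut (FreeGroup (Fin n))) :
    σ ∈ magnusKernel n ↔
      σ ∈ johnsonFiltration (FreeGroup (Fin n)) 1 ∧
      ∀ w, w⁻¹ * σ w ∈ derivedSeries (FreeGroup (Fin n)) 2 := by
  rw [magnusKernel, Subgroup.mem_inf, mem_ker_nuAut_iff]

lemma conj_mem_magnusKernel {d : FreeGroup (Fin n)}
    (hd : d ∈ derivedSeries (FreeGroup (Fin n)) 2) : MulAut.conj d ∈ magnusKernel n := by
  rw [mem_magnusKernel_iff]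
  constructor
  · rw [mem_johnsonFiltration]
    intro w
    rw [Subgroup.top_lowerCentralSeries_one]
    have h2 : w⁻¹ * (MulAut.conj d) w = ⁅w⁻¹, d⁆ := by
      rw [MulAut.conj_apply, commutatorElement_def]; group
    rw [h2, commutator_def]
    exact Subgroup.commutator_mem_commutator (Subgroup.mem_top _) (Subgroup.mem_top _)
  · intro w
    have h2 : w⁻¹ * (MulAut.conj d) w = (w⁻¹ * d * w) * d⁻¹ := by
      rw [MulAut.conj_apply]; group
    rw [h2]
    refine mul_mem ?_ (inv_mem hd)
    have h3 := (derivedSeries_normal (G := FreeGroup (Fin n)) 2).conj_mem d hd w⁻¹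
    rwa [inv_inv] at h3

/-! ### The concrete elements -/

def xg (n : ℕ) (hn : 2 ≤ n) : FreeGroup (Fin n) := FreeGroup.of ⟨0, by omega⟩

def yg (n : ℕ) (hn : 2 ≤ n) : FreeGroup (Fin n) := FreeGroup.of ⟨1, by omega⟩

def cg (n : ℕ) (hn : 2 ≤ n) : FreeGroup (Fin n) := ⁅xg n hn, yg n hn⁆

def ug (n : ℕ) (hn : 2 ≤ n) (j : ℕ) : FreeGroup (Fin n) :=
  (xg n hn)⁻¹ ^ j * cg n hn * (xg n hn) ^ j

def dg (n : ℕ) (hn : 2 ≤ n) (j : ℕ) : FreeGroup (Fin n) := ⁅ug n hn 0, ug n hn j⁆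

lemma cg_mem_D1 (n : ℕ) (hn : 2 ≤ n) : cg n hn ∈ derivedSeries (FreeGroup (Fin n)) 1 := by
  rw [derivedSeries_succ, derivedSeries_zero]
  exact Subgroup.commutator_mem_commutator (Subgroup.mem_top _) (Subgroup.mem_top _)

lemma ug_mem_D1 (n : ℕ) (hn : 2 ≤ n) (j : ℕ) :
    ug n hn j ∈ derivedSeries (FreeGroup (Fin n)) 1 := by
  have h2 := (derivedSeries_normal (G := FreeGroup (Fin n)) 1).conj_mem _ (cg_mem_D1 n hn)
    ((xg n hn)⁻¹ ^ j)
  rw [ug]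
  have h3 : ((xg n hn)⁻¹ ^ j)⁻¹ = (xg n hn) ^ j := by
    rw [inv_pow, inv_inv]
  rwa [h3] at h2

lemma dg_mem_D2 (n : ℕ) (hn : 2 ≤ n) (j : ℕ) :
    dg n hn j ∈ derivedSeries (FreeGroup (Fin n)) 2 := by
  rw [dg, show (2:ℕ) = 1 + 1 from rfl, derivedSeries_succ]
  exact Subgroup.commutator_mem_commutator (ug_mem_D1 n hn 0) (ug_mem_D1 n hn j)

lemma ug_conj (n : ℕ) (hn : 2 ≤ n) (a : ℕ) :
    (xg n hn)⁻¹ * ug n hn a * xg n hn = ug n hn (a + 1) := by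
  rw [ug, ug, pow_succ, pow_succ']
  group

lemma dg_conj (n : ℕ) (hn : 2 ≤ n) (j : ℕ) :
    (xg n hn)⁻¹ * dg n hn j * xg n hn = ⁅ug n hn 1, ug n hn (j + 1)⁆ := by
  rw [show (1:ℕ) = 0 + 1 from rfl, ← ug_conj n hn 0, ← ug_conj n hn j, dg,
    commutatorElement_def, commutatorElement_def]
  group

/-! ### Values of the lamplighter on these elements -/

lemma psi_xg (n : ℕ) (hn : 2 ≤ n) :
    psi n (xg n hn) = SemidirectProduct.inr (Multiplicative.ofAdd ((1:ℤ), (0:ℤ))) := by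
  rw [psi, xg, FreeGroup.lift_apply_of, lampGen]
  rfl

lemma psi_yg (n : ℕ) (hn : 2 ≤ n) :
    psi n (yg n hn) =
      ⟨Multiplicative.ofAdd (fun t : ℤ × ℤ => if t = 0 then (1:ℤ) else 0),
        Multiplicative.ofAdd ((0:ℤ), (1:ℤ))⟩ := by
  rw [psi, yg, FreeGroup.lift_apply_of, lampGen]
  rfl

lemma psi_xg_pow (n : ℕ) (hn : 2 ≤ n) (j : ℕ) :
    psi n ((xg n hn) ^ j) = SemidirectProduct.inr (Multiplicative.ofAdd ((j:ℤ), (0:ℤ))) := by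
  rw [map_pow, psi_xg, ← map_pow]
  congr 1
  rw [← ofAdd_nsmul]
  congr 1
  simp [Prod.smul_def]

lemma psi_xg_inv_pow (n : ℕ) (hn : 2 ≤ n) (j : ℕ) :
    psi n ((xg n hn)⁻¹ ^ j) = SemidirectProduct.inr (Multiplicative.ofAdd ((-(j:ℤ)), (0:ℤ))) := by
  rw [inv_pow, map_inv, psi_xg_pow, ← map_inv]
  rfl

lemma psi_ug_left (n : ℕ) (hn : 2 ≤ n) (j : ℕ) (t : ℤ × ℤ) :
    (psi n (ug n hn j)).left.toAdd t
      = (psi n (cg n hn)).left.toAdd (t + (-(j:ℤ), 0)) := by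
  rw [ug, map_mul, map_mul, psi_xg_pow n hn j, psi_xg_inv_pow n hn j]
  rw [SemidirectProduct.mul_left, SemidirectProduct.mul_left, SemidirectProduct.mul_right]
  simp only [SemidirectProduct.left_inr, SemidirectProduct.right_inr, one_mul, map_one, mul_one]
  exact shiftHom_apply _ _ t

lemma psi_cg_left (n : ℕ) (hn : 2 ≤ n) (t : ℤ × ℤ) :
    (psi n (cg n hn)).left.toAdd t
      = (if t = (-1, 0) then 1 else 0) - (if t = (0, 0) then 1 else 0) := by
  rw [cg, commutatorElement_def, map_mul, map_mul, map_mul, map_inv, map_inv,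
    psi_xg n hn, psi_yg n hn]
  simp only [SemidirectProduct.mul_left, SemidirectProduct.mul_right, SemidirectProduct.inv_left,
    SemidirectProduct.inv_right, SemidirectProduct.left_inr, SemidirectProduct.right_inr]
  simp [shiftHom, shiftAdd, AddEquiv.toMultiplicative, AddMonoidHom.toMultiplicative,
    toAdd_mul, toAdd_inv, Prod.add_def]
  simp only [Prod.ext_iff]
  norm_num
  split_ifs <;> omega

lemma fE_ug (n : ℕ) (hn : 2 ≤ n) (h : ℤ × ℤ) (j : ℕ) :
    fE n h (ug n hn j)
      = (if h + (-(j:ℤ), 0) = (-1, 0) then 1 else 0)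
        - (if h + (-(j:ℤ), 0) = (0, 0) then 1 else 0) := by
  rw [fE, psi_ug_left n hn j h, psi_cg_left n hn]

lemma fE_ug_h1 (n : ℕ) (hn : 2 ≤ n) (j : ℕ) :
    fE n h1 (ug n hn j) = if j = 0 then 1 else 0 := by
  rw [fE_ug n hn h1 j]
  simp only [h1, Prod.mk_add_mk, Prod.mk.injEq, add_zero, eq_self_iff_true, and_true]
  split_ifs <;> omega

lemma fE_ug_h2 (n : ℕ) (hn : 2 ≤ n) (k j : ℕ) :
    fE n (h2 k) (ug n hn j)
      = (if (j:ℤ) = (k:ℤ) then 1 else 0) - (if (j:ℤ) = (k:ℤ) - 1 then 1 else 0) := by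
  rw [fE_ug n hn (h2 k) j]
  simp only [h2, Prod.mk_add_mk, Prod.mk.injEq, add_zero, eq_self_iff_true, and_true]
  split_ifs <;> omega

/-! ### The homomorphisms `Λ_k : K_n → ℤ` -/

def lam (n k : ℕ) (hn : 2 ≤ n) (σ : MulAut (FreeGroup (Fin n))) : ℤ :=
  mu n k ((xg n hn)⁻¹ * σ (xg n hn))

lemma lam_one (n k : ℕ) (hn : 2 ≤ n) : lam n k hn 1 = 0 := by
  rw [lam, MulAut.one_apply, inv_mul_cancel, mu_one]

lemma lam_mul (n k : ℕ) (hn : 2 ≤ n) (σ τ : MulAut (FreeGroup (Fin n)))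
    (hσ : ∀ w, w⁻¹ * σ w ∈ derivedSeries (FreeGroup (Fin n)) 2)
    (hτ : ∀ w, w⁻¹ * τ w ∈ derivedSeries (FreeGroup (Fin n)) 2) :
    lam n k hn (σ * τ) = lam n k hn σ + lam n k hn τ := by
  have hdecomp : (xg n hn)⁻¹ * (σ * τ) (xg n hn)
      = ((xg n hn)⁻¹ * σ (xg n hn)) * σ ((xg n hn)⁻¹ * τ (xg n hn)) := by
    rw [MulAut.mul_apply, map_mul, map_inv]
    group
  rw [lam, hdecomp,
    mu_mul n k (D2_le_R n (hσ _)) (D2_le_R n (sigma_mem_D2 σ hσ (hτ _))) (fE_vanish h1 (hσ _)),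
    mu_equivariant n k σ hσ (hτ _)]
  rfl

def Lam (n k : ℕ) (hn : 2 ≤ n) : ↥(magnusKernel n) →* Multiplicative ℤ where
  toFun σ := Multiplicative.ofAdd (lam n k hn σ.1)
  map_one' := by
    show Multiplicative.ofAdd
      (lam n k hn ((1 : ↥(magnusKernel n)) : MulAut (FreeGroup (Fin n)))) = 1
    rw [show ((1 : ↥(magnusKernel n)) : MulAut (FreeGroup (Fin n))) = 1 from rfl, lam_one]
    rfl
  map_mul' σ τ := by
    show Multiplicative.ofAdd
      (lam n k hn ((σ * τ : ↥(magnusKernel n)) : MulAut (FreeGroup (Fin n)))) = _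
    rw [show ((σ * τ : ↥(magnusKernel n)) : MulAut (FreeGroup (Fin n))) = σ.1 * τ.1 from rfl,
      lam_mul n k hn σ.1 τ.1 ((mem_magnusKernel_iff σ.1).mp σ.2).2
      ((mem_magnusKernel_iff τ.1).mp τ.2).2]
    rfl

lemma lam_conj_dg (n k : ℕ) (hn : 2 ≤ n) (j : ℕ) (hj : 1 ≤ j) :
    lam n k hn (MulAut.conj (dg n hn j))
      = (if (j:ℤ) = (k:ℤ) - 1 then 1 else 0) - (if (j:ℤ) = (k:ℤ) then 1 else 0) := by
  have hd := dg_mem_D2 n hn j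
  have hxd : (xg n hn)⁻¹ * (MulAut.conj (dg n hn j)) (xg n hn)
      = ((xg n hn)⁻¹ * dg n hn j * xg n hn) * (dg n hn j)⁻¹ := by
    rw [MulAut.conj_apply]
    group
  have hcd : (xg n hn)⁻¹ * dg n hn j * xg n hn ∈ derivedSeries (FreeGroup (Fin n)) 2 := by
    have h3 := (derivedSeries_normal (G := FreeGroup (Fin n)) 2).conj_mem _ hd (xg n hn)⁻¹
    rwa [inv_inv] at h3
  rw [lam, hxd, mu_mul n k (D2_le_R n hcd) (inv_mem (D2_le_R n hd)) (fE_vanish h1 hcd),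
    mu_inv n k (D2_le_R n hd) (fE_vanish h1 hd), dg_conj n hn j, dg,
    mu_commutator n k (D1_le_R n (ug_mem_D1 n hn 1)) (D1_le_R n (ug_mem_D1 n hn (j+1))),
    mu_commutator n k (D1_le_R n (ug_mem_D1 n hn 0)) (D1_le_R n (ug_mem_D1 n hn j)),
    fE_ug_h1 n hn 1, fE_ug_h1 n hn (j+1), fE_ug_h1 n hn 0, fE_ug_h1 n hn j,
    fE_ug_h2 n hn k j, fE_ug_h2 n hn k 0]
  have hj0 : ¬(j = 0) := by omega
  have hj1 : ¬((1:ℕ) = 0) := by omega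
  have hj2 : ¬(j + 1 = 0) := by omega
  rw [if_neg hj0, if_neg hj1, if_neg hj2, if_pos rfl]
  ring

/-! ### Passing to the rationalized abelianization -/

def Xi (n k : ℕ) (hn : 2 ≤ n) : Additive (Abelianization ↥(magnusKernel n)) →+ ℚ where
  toFun a := (((Abelianization.lift (Lam n k hn)) a.toMul).toAdd : ℚ)
  map_zero' := by
    show (((Abelianization.lift (Lam n k hn)) (1 : Abelianization _)).toAdd : ℚ) = 0
    rw [map_one]
    rfl
  map_add' a b := by
    show (((Abelianization.lift (Lam n k hn)) (a.toMul * b.toMul)).toAdd : ℚ) = _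
    rw [map_mul, toAdd_mul]
    push_cast
    rfl

def XiL (n k : ℕ) (hn : 2 ≤ n) :
    (ℚ ⊗[ℤ] Additive (Abelianization ↥(magnusKernel n))) →ₗ[ℚ] ℚ :=
  LinearMap.liftBaseChange ℚ (Xi n k hn).toIntLinearMap

def kap (n : ℕ) (hn : 2 ≤ n) (j : ℕ) : ↥(magnusKernel n) :=
  ⟨MulAut.conj (dg n hn (j + 1)), conj_mem_magnusKernel (dg_mem_D2 n hn (j + 1))⟩

lemma XiL_val (n k : ℕ) (hn : 2 ≤ n) (j : ℕ) :
    XiL n k hn ((1:ℚ) ⊗ₜ[ℤ] (Additive.ofMul (Abelianization.of (kap n hn j))))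
      = ((if ((j:ℤ) + 1) = (k:ℤ) - 1 then 1 else 0)
          - (if ((j:ℤ) + 1) = (k:ℤ) then 1 else 0) : ℚ) := by
  rw [XiL, LinearMap.liftBaseChange_tmul, one_smul]
  show (((Abelianization.lift (Lam n k hn)) (Abelianization.of (kap n hn j))).toAdd : ℚ) = _
  rw [Abelianization.lift_apply_of]
  show ((lam n k hn (kap n hn j).1 : ℤ) : ℚ) = _
  rw [kap, lam_conj_dg n k hn (j+1) (by omega)]
  push_cast
  ring

end S17

theorem statement17 (n : ℕ) (hn : 2 ≤ n) :
    ¬ Module.Finite ℚ (ℚ ⊗[ℤ] Additive (Abelianization ↥(magnusKernel n))) ∧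
    ¬ Group.FG ↥(magnusKernel n) := by
  classical
  have main : ¬ Module.Finite ℚ (ℚ ⊗[ℤ] Additive (Abelianization ↥(magnusKernel n))) := by
    intro hfin
    have hli : LinearIndependent ℚ (fun j : ℕ =>
        ((1:ℚ) ⊗ₜ[ℤ] (Additive.ofMul (Abelianization.of (S17.kap n hn j)))
          : ℚ ⊗[ℤ] Additive (Abelianization ↥(magnusKernel n)))) := by
      rw [linearIndependent_iff']
      intro s g hsum i hi
      by_contra hgi
      set t : Finset ℕ := s.filter (fun i => g i ≠ 0) with ht
      have hit : i ∈ t := Finset.mem_filter.mpr ⟨hi, hgi⟩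
      have htne : t.Nonempty := ⟨i, hit⟩
      set m : ℕ := t.min' htne with hm
      have hmt : m ∈ t := t.min'_mem htne
      have hms : m ∈ s := (Finset.mem_filter.mp hmt).1
      have hgm : g m ≠ 0 := (Finset.mem_filter.mp hmt).2
      have h0 := congrArg (S17.XiL n (m + 1) hn) hsum
      rw [map_sum, map_zero] at h0
      have hterm : ∀ b ∈ s, b ≠ m →
          S17.XiL n (m + 1) hn (g b • ((1:ℚ) ⊗ₜ[ℤ]
            (Additive.ofMul (Abelianization.of (S17.kap n hn b))))) = 0 := by
        intro b hbs hbm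
        rw [map_smul, S17.XiL_val n (m+1) hn b]
        by_cases hgb : g b = 0
        · rw [hgb, zero_smul]
        · have hbt : b ∈ t := Finset.mem_filter.mpr ⟨hbs, hgb⟩
          have hmb : m ≤ b := t.min'_le b hbt
          have hc1 : ¬((b:ℤ) + 1 = ((m+1:ℕ):ℤ) - 1) := by push_cast; omega
          have hc2 : ¬((b:ℤ) + 1 = ((m+1:ℕ):ℤ)) := by push_cast; omega
          rw [if_neg hc1, if_neg hc2]
          simp
      rw [Finset.sum_eq_single_of_mem m hms hterm] at h0
      rw [map_smul, S17.XiL_val n (m+1) hn m] at h0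
      have hc1 : ¬((m:ℤ) + 1 = ((m+1:ℕ):ℤ) - 1) := by push_cast; omega
      have hc2 : ((m:ℤ) + 1 = ((m+1:ℕ):ℤ)) := by push_cast; omega
      rw [if_neg hc1, if_pos hc2] at h0
      apply hgm
      have : g m * (0 - 1 : ℚ) = 0 := by
        simpa using h0
      have := mul_eq_zero.mp this
      rcases this with h | h
      · exact h
      · norm_num at h
    exact Module.Finite.not_linearIndependent_of_infinite _ hli
  refine ⟨main, ?_⟩
  intro hFG
  apply main
  haveI := hFG
  have hsurj : Function.Surjective
      (Abelianization.of : ↥(magnusKernel n) → Abelianization ↥(magnusKernel n)) := by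
    intro b
    induction b using QuotientGroup.induction_on with
    | H g => exact ⟨g, rfl⟩
  haveI h1 : Group.FG (Abelianization ↥(magnusKernel n)) := Group.fg_of_surjective hsurj
  haveI h2 : AddGroup.FG (Additive (Abelianization ↥(magnusKernel n))) :=
    GroupFG.iff_add_fg.mp h1
  haveI h3 : Module.Finite ℤ (Additive (Abelianization ↥(magnusKernel n))) :=
    Module.Finite.iff_addGroup_fg.mpr h2
  infer_instance
end
end
end
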